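/- Fix real parameters r, s, c₃ and c ≥ 0 with |s| < 1, such that H₊(z) ≤ 1+sz and H₋(z) ≤ 1−sz for all z ∈ [0,1]. If s ≥ 0, r·c₃ ≤ 0, and c₃² − c² ≥ s·r·c₃, then F(z) ≤ F(1) for all z ∈ [0,1], and F(1) = (1/4)(1+s+r+c₃)log₂((1+s+r+c₃)/(1+s)) + (1/4)(1+s−r−c₃)log₂((1+s−r−c₃)/(1+s)) + (1/4)(1−s+r−c₃)log₂((1−s+r−c₃)/(1−s)) + (1/4)(1−s−r+c₃)log₂((1−s−r+c₃)/(1−s)). -/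

import Mathlib

/-- `H₊(z) = √(c²(1−z²)+(r+c₃z)²)`. -/
noncomputable def Hp (r c₃ c z : ℝ) : ℝ := Real.sqrt (c^2*(1 - z^2) + (r + c₃*z)^2)

/-- `H₋(z) = √(c²(1−z²)+(r−c₃z)²)`. -/
noncomputable def Hm (r c₃ c z : ℝ) : ℝ := Real.sqrt (c^2*(1 - z^2) + (r - c₃*z)^2)

/-- The one-variable function `F(z)` from the quantum discord of X-states. -/
noncomputable def F (r s c₃ c z : ℝ) : ℝ :=
  (1/4) * (1 + s*z + Hp r c₃ c z) * Real.logb 2 ((1 + s*z + Hp r c₃ c z) / (1 + s*z)) +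
  (1/4) * (1 + s*z - Hp r c₃ c z) * Real.logb 2 ((1 + s*z - Hp r c₃ c z) / (1 + s*z)) +
  (1/4) * (1 - s*z + Hm r c₃ c z) * Real.logb 2 ((1 - s*z + Hm r c₃ c z) / (1 - s*z)) +
  (1/4) * (1 - s*z - Hm r c₃ c z) * Real.logb 2 ((1 - s*z - Hm r c₃ c z) / (1 - s*z))



open Real Set


private lemma logsum (a b cc d : ℝ) (ha : 0 ≤ a) (hb : 0 ≤ b) (hc : 0 < cc) (hd : 0 < d) :
    (a+b) * Real.logb 2 ((a+b)/(cc+d)) ≤ a * Real.logb 2 (a/cc) + b * Real.logb 2 (b/d) := by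
  have hlog2 : (0:ℝ) < Real.log 2 := Real.log_pos (by norm_num)
  have main : (a+b) * Real.log ((a+b)/(cc+d)) ≤ a * Real.log (a/cc) + b * Real.log (b/d) := by
    rcases eq_or_lt_of_le ha with rfl | ha'
    · simp only [zero_add, zero_mul, zero_div]
      rcases eq_or_lt_of_le hb with rfl | hb'
      · simp
      · have h1 : b/(cc+d) ≤ b/d := by
          apply div_le_div_of_nonneg_left hb (by linarith) (by linarith)
        have h2 : Real.log (b/(cc+d)) ≤ Real.log (b/d) :=
          Real.log_le_log (by positivity) h1
        have := mul_le_mul_of_nonneg_left h2 hb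
        linarith
    · rcases eq_or_lt_of_le hb with rfl | hb'
      · have h1 : a/(cc+d) ≤ a/cc := by
          apply div_le_div_of_nonneg_left ha'.le (by linarith) (by linarith)
        have h2 : Real.log (a/(cc+d)) ≤ Real.log (a/cc) :=
          Real.log_le_log (by positivity) h1
        have := mul_le_mul_of_nonneg_left h2 ha
        simp only [add_zero, zero_mul]
        linarith
      · have k1 : Real.log ((a+b)/(cc+d)) - Real.log (a/cc) ≤ cc*(a+b)/(a*(cc+d)) - 1 := by
          have h0 : (0:ℝ) < ((a+b)/(cc+d))/(a/cc) := by positivity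
          have h1 := Real.log_le_sub_one_of_pos h0
          have h2 : ((a+b)/(cc+d))/(a/cc) = cc*(a+b)/(a*(cc+d)) := by
            field_simp
          have h3 : Real.log (((a+b)/(cc+d))/(a/cc))
              = Real.log ((a+b)/(cc+d)) - Real.log (a/cc) :=
            Real.log_div (by positivity) (by positivity)
          rw [h3, h2] at h1; linarith
        have k2 : Real.log ((a+b)/(cc+d)) - Real.log (b/d) ≤ d*(a+b)/(b*(cc+d)) - 1 := by
          have h0 : (0:ℝ) < ((a+b)/(cc+d))/(b/d) := by positivity
          have h1 := Real.log_le_sub_one_of_pos h0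
          have h2 : ((a+b)/(cc+d))/(b/d) = d*(a+b)/(b*(cc+d)) := by
            field_simp
          have h3 : Real.log (((a+b)/(cc+d))/(b/d))
              = Real.log ((a+b)/(cc+d)) - Real.log (b/d) :=
            Real.log_div (by positivity) (by positivity)
          rw [h3, h2] at h1; linarith
        have m1 := mul_le_mul_of_nonneg_left k1 ha
        have m2 := mul_le_mul_of_nonneg_left k2 hb
        have e1 : a * (cc*(a+b)/(a*(cc+d)) - 1) = cc*(a+b)/(cc+d) - a := by
          field_simp
        have e2 : b * (d*(a+b)/(b*(cc+d)) - 1) = d*(a+b)/(cc+d) - b := by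
          field_simp
        rw [e1] at m1; rw [e2] at m2
        have e3 : cc*(a+b)/(cc+d) - a + (d*(a+b)/(cc+d) - b) = 0 := by
          field_simp; ring
        nlinarith [m1, m2]
  simp only [Real.logb]
  calc (a+b) * (Real.log ((a+b)/(cc+d)) / Real.log 2)
      = ((a+b) * Real.log ((a+b)/(cc+d))) / Real.log 2 := by ring
    _ ≤ (a * Real.log (a/cc) + b * Real.log (b/d)) / Real.log 2 := by
        gcongr
    _ = a * (Real.log (a/cc) / Real.log 2) + b * (Real.log (b/d) / Real.log 2) := by ring


noncomputable def Tfun (u h : ℝ) : ℝ :=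
  (1/4) * (u + h) * Real.logb 2 ((u + h) / u) + (1/4) * (u - h) * Real.logb 2 ((u - h) / u)

private lemma Tmono (u h h' : ℝ) (h0 : 0 ≤ h) (hh : h ≤ h') (hu : h' ≤ u) (hu0 : 0 < u) :
    Tfun u h ≤ Tfun u h' := by
  rcases eq_or_lt_of_le hh with rfl | hlt
  · exact le_refl _
  have hhp : 0 < h' := lt_of_le_of_lt h0 hlt
  set t : ℝ := (h' + h) / (2 * h') with ht
  have htpos : 0 < t := by positivity
  have ht1 : t < 1 := by
    rw [ht, div_lt_one (by positivity)]; linarith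
  have h1t : 0 < 1 - t := by linarith
  have e1 : u + h = t * (u + h') + (1 - t) * (u - h') := by
    have h2 : t * (2*h') = h' + h := by rw [ht]; exact div_mul_cancel₀ _ (by positivity)
    linear_combination (-1:ℝ) * h2
  have e2 : u - h = (1 - t) * (u + h') + t * (u - h') := by
    have h2 : t * (2*h') = h' + h := by rw [ht]; exact div_mul_cancel₀ _ (by positivity)
    linear_combination h2
  have r1 : (t * (u + h')) / (t * u) = (u + h') / u := by
    rw [mul_div_mul_left _ _ (ne_of_gt htpos)]
  have r2 : ((1-t) * (u - h')) / ((1-t) * u) = (u - h') / u := by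
    rw [mul_div_mul_left _ _ (ne_of_gt h1t)]
  have r3 : ((1-t) * (u + h')) / ((1-t) * u) = (u + h') / u := by
    rw [mul_div_mul_left _ _ (ne_of_gt h1t)]
  have r4 : (t * (u - h')) / (t * u) = (u - h') / u := by
    rw [mul_div_mul_left _ _ (ne_of_gt htpos)]
  have key1 : (u + h) * Real.logb 2 ((u + h) / u)
      ≤ t * (u + h') * Real.logb 2 ((u + h') / u)
        + (1 - t) * (u - h') * Real.logb 2 ((u - h') / u) := by
    have ls := logsum (t * (u + h')) ((1-t) * (u - h')) (t * u) ((1-t) * u)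
      (mul_nonneg htpos.le (by linarith)) (mul_nonneg h1t.le (by linarith))
      (mul_pos htpos hu0) (mul_pos h1t hu0)
    rw [r1, r2] at ls
    have eu : t * u + (1-t) * u = u := by ring
    rw [eu, ← e1] at ls
    calc (u + h) * Real.logb 2 ((u + h) / u) = _ := rfl
      _ ≤ _ := ls
      _ = _ := by ring
  have key2 : (u - h) * Real.logb 2 ((u - h) / u)
      ≤ (1 - t) * (u + h') * Real.logb 2 ((u + h') / u)
        + t * (u - h') * Real.logb 2 ((u - h') / u) := by
    have ls := logsum ((1-t) * (u + h')) (t * (u - h')) ((1-t) * u) (t * u)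
      (mul_nonneg h1t.le (by linarith)) (mul_nonneg htpos.le (by linarith))
      (mul_pos h1t hu0) (mul_pos htpos hu0)
    rw [r3, r4] at ls
    have eu : (1-t) * u + t * u = u := by ring
    rw [eu, ← e2] at ls
    calc (u - h) * Real.logb 2 ((u - h) / u) = _ := rfl
      _ ≤ _ := ls
      _ = _ := by ring
  unfold Tfun
  nlinarith [key1, key2]

private lemma Thomog (u h lam : ℝ) (hlam : 0 < lam) :
    Tfun (lam * u) (lam * h) = lam * Tfun u h := by
  unfold Tfun
  have e1 : (lam * u + lam * h) / (lam * u) = (u + h)/u := by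
    rw [show lam * u + lam * h = lam * (u+h) by ring, mul_div_mul_left _ _ (ne_of_gt hlam)]
  have e2 : (lam * u - lam * h) / (lam * u) = (u - h)/u := by
    rw [show lam * u - lam * h = lam * (u-h) by ring, mul_div_mul_left _ _ (ne_of_gt hlam)]
  rw [e1, e2]; ring

private lemma Tconvex (lam mu u₁ h₁ u₂ h₂ : ℝ) (hlam : 0 ≤ lam) (hmu : 0 ≤ mu)
    (hlm : lam + mu = 1) (h10 : 0 ≤ h₁) (h1u : h₁ ≤ u₁) (hu1 : 0 < u₁)
    (h20 : 0 ≤ h₂) (h2u : h₂ ≤ u₂) (hu2 : 0 < u₂) :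
    Tfun (lam * u₁ + mu * u₂) (lam * h₁ + mu * h₂) ≤ lam * Tfun u₁ h₁ + mu * Tfun u₂ h₂ := by
  rcases eq_or_lt_of_le hlam with rfl | hlam'
  · have : mu = 1 := by linarith
    subst this; simp
  rcases eq_or_lt_of_le hmu with rfl | hmu'
  · have : lam = 1 := by linarith
    subst this; simp
  have key1 : (lam * u₁ + mu * u₂ + (lam * h₁ + mu * h₂))
        * Real.logb 2 ((lam * u₁ + mu * u₂ + (lam * h₁ + mu * h₂)) / (lam * u₁ + mu * u₂))
      ≤ lam * ((u₁ + h₁) * Real.logb 2 ((u₁ + h₁)/u₁)) + mu * ((u₂ + h₂) * Real.logb 2 ((u₂ + h₂)/u₂)) := by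
    have ls := logsum (lam * (u₁ + h₁)) (mu * (u₂ + h₂)) (lam * u₁) (mu * u₂)
      (mul_nonneg hlam'.le (by linarith)) (mul_nonneg hmu'.le (by linarith))
      (mul_pos hlam' hu1) (mul_pos hmu' hu2)
    rw [mul_div_mul_left _ _ (ne_of_gt hlam'), mul_div_mul_left _ _ (ne_of_gt hmu')] at ls
    calc _ = (lam * (u₁ + h₁) + mu * (u₂ + h₂))
        * Real.logb 2 ((lam * (u₁ + h₁) + mu * (u₂ + h₂)) / (lam * u₁ + mu * u₂)) := by ring_nf
      _ ≤ _ := ls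
      _ = _ := by ring
  have key2 : (lam * u₁ + mu * u₂ - (lam * h₁ + mu * h₂))
        * Real.logb 2 ((lam * u₁ + mu * u₂ - (lam * h₁ + mu * h₂)) / (lam * u₁ + mu * u₂))
      ≤ lam * ((u₁ - h₁) * Real.logb 2 ((u₁ - h₁)/u₁)) + mu * ((u₂ - h₂) * Real.logb 2 ((u₂ - h₂)/u₂)) := by
    have ls := logsum (lam * (u₁ - h₁)) (mu * (u₂ - h₂)) (lam * u₁) (mu * u₂)
      (mul_nonneg hlam'.le (by linarith)) (mul_nonneg hmu'.le (by linarith))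
      (mul_pos hlam' hu1) (mul_pos hmu' hu2)
    rw [mul_div_mul_left _ _ (ne_of_gt hlam'), mul_div_mul_left _ _ (ne_of_gt hmu')] at ls
    calc _ = (lam * (u₁ - h₁) + mu * (u₂ - h₂))
        * Real.logb 2 ((lam * (u₁ - h₁) + mu * (u₂ - h₂)) / (lam * u₁ + mu * u₂)) := by ring_nf
      _ ≤ _ := ls
      _ = _ := by ring
  unfold Tfun
  nlinarith [key1, key2]

private lemma logratio_bound (a b : ℝ) (hb : 0 < b) (hab : b ≤ a) :
    Real.log a - Real.log b ≤ (a^2 - b^2) / (2*a*b) := by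
  have ha : 0 < a := lt_of_lt_of_le hb hab
  -- f(t) = (t - 1/t)/2 - log t is monotone on [1, ∞)
  set f : ℝ → ℝ := fun t => (t - t⁻¹)/2 - Real.log t with hf
  have hmono : MonotoneOn f (Set.Ici 1) := by
    apply monotoneOn_of_deriv_nonneg (convex_Ici 1)
    · apply ContinuousOn.sub
      · apply ContinuousOn.div_const
        exact (continuousOn_id.sub (continuousOn_id.inv₀ (fun x hx => by
          simp only [mem_Ici, id] at *; intro h; linarith)))
      · apply Real.continuousOn_log.mono
        intro x hx; simp only [mem_Ici] at hx; simp; intro h; linarith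
    · intro x hx
      rw [interior_Ici] at hx
      simp only [mem_Ioi] at hx
      have hx0 : x ≠ 0 := by linarith
      have : HasDerivAt f ((1 - (-(x^2)⁻¹))/2 - x⁻¹) x := by
        apply HasDerivAt.sub
        · exact ((hasDerivAt_id x).sub (hasDerivAt_inv hx0)).div_const 2
        · exact Real.hasDerivAt_log hx0
      exact this.differentiableAt.differentiableWithinAt
    · intro x hx
      rw [interior_Ici] at hx
      simp only [mem_Ioi] at hx
      have hx0 : x ≠ 0 := by linarith
      have hd : HasDerivAt f ((1 - (-(x^2)⁻¹))/2 - x⁻¹) x := by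
        apply HasDerivAt.sub
        · exact ((hasDerivAt_id x).sub (hasDerivAt_inv hx0)).div_const 2
        · exact Real.hasDerivAt_log hx0
      rw [hd.deriv]
      have hx1 : 0 < x := by linarith
      have : (1 - (-(x^2)⁻¹))/2 - x⁻¹ = (x - 1)^2 / (2*x^2) := by
        field_simp
        ring
      rw [this]; positivity
  have h1 : f 1 ≤ f (a/b) := by
    apply hmono (by simp) (by simp [mem_Ici]; exact (one_le_div hb).mpr hab)
    exact (one_le_div hb).mpr hab
  have hf1 : f 1 = 0 := by simp [hf]
  have hfab : f (a/b) = (a/b - b/a)/2 - (Real.log a - Real.log b) := by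
    simp only [hf]
    rw [Real.log_div (ne_of_gt ha) (ne_of_gt hb)]
    congr 1
    rw [inv_div]
  rw [hf1, hfab] at h1
  have : (a/b - b/a)/2 = (a^2 - b^2)/(2*a*b) := by field_simp
  linarith [h1, this.symm.le]

private lemma deriv2_algebra (s uu hh qq dd l1 l2 : ℝ) (huu : uu ≠ 0) (hhh : hh ≠ 0)
    (hup : uu + hh ≠ 0) (hum : uu - hh ≠ 0) :
    (2*s*hh^2 - uu*qq)^2/(2*uu*hh^2*(uu^2 - hh^2)) + ((4*hh^2*dd - qq^2)/(4*hh^3))*(l1 - l2)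
    = s*((uu + hh)⁻¹ * (s + qq/(2*hh)) + (uu - hh)⁻¹ * (s - qq/(2*hh)) - 2*((uu)⁻¹ * s))
      + ((2*dd*(2*hh) - qq*(2*(qq/(2*hh))))/(2*hh)^2 * (l1 - l2)
        + (qq/(2*hh)) * ((uu + hh)⁻¹ * (s + qq/(2*hh)) - (uu - hh)⁻¹ * (s - qq/(2*hh)))) := by
  have h1 : uu^2 - hh^2 = (uu + hh)*(uu - hh) := by ring
  rw [h1]
  have hP : (uu + hh)*(uu - hh) ≠ 0 := mul_ne_zero hup hum
  field_simp
  ring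

private lemma sqrt_quad_convex (A bb D x y lam mu : ℝ)
    (hqx : 0 ≤ A + bb*x + D*x^2) (hqy : 0 ≤ A + bb*y + D*y^2)
    (hdisc : bb^2 - 4*A*D ≤ 0) (hlam : 0 ≤ lam) (hmu : 0 ≤ mu) (hlm : lam + mu = 1) :
    Real.sqrt (A + bb*(lam*x+mu*y) + D*(lam*x+mu*y)^2)
      ≤ lam * Real.sqrt (A + bb*x + D*x^2) + mu * Real.sqrt (A + bb*y + D*y^2) := by
  set sx := Real.sqrt (A + bb*x + D*x^2) with hsx
  set sy := Real.sqrt (A + bb*y + D*y^2) with hsy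
  have hsx0 : 0 ≤ sx := Real.sqrt_nonneg _
  have hsy0 : 0 ≤ sy := Real.sqrt_nonneg _
  have hsx2 : sx^2 = A + bb*x + D*x^2 := Real.sq_sqrt hqx
  have hsy2 : sy^2 = A + bb*y + D*y^2 := Real.sq_sqrt hqy
  have hcross : 2*A + bb*(x+y) + 2*D*x*y ≤ 2*sx*sy := by
    rcases le_or_gt (2*A + bb*(x+y) + 2*D*x*y) 0 with h | h
    · exact h.trans (by positivity)
    · have hsq : (2*A + bb*(x+y) + 2*D*x*y)^2 ≤ (2*sx*sy)^2 := by
        nlinarith [sq_nonneg (x - y)]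
      nlinarith [hsq, h, mul_nonneg hsx0 hsy0]
  have hqm : A + bb*(lam*x+mu*y) + D*(lam*x+mu*y)^2 ≤ (lam*sx + mu*sy)^2 := by
    have hmu' : mu = 1 - lam := by linarith
    subst hmu'
    have key := mul_le_mul_of_nonneg_left hcross (mul_nonneg hlam hmu)
    have expand : (lam*sx + (1-lam)*sy)^2 - (A + bb*(lam*x+(1-lam)*y) + D*(lam*x+(1-lam)*y)^2)
        = lam*(1-lam)*(2*sx*sy) - lam*(1-lam)*(2*A + bb*(x+y) + 2*D*x*y) := by
      linear_combination lam^2 * hsx2 + (1-lam)^2 * hsy2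
    linarith [key, expand]
  calc Real.sqrt (A + bb*(lam*x+mu*y) + D*(lam*x+mu*y)^2)
      ≤ Real.sqrt ((lam*sx + mu*sy)^2) := Real.sqrt_le_sqrt hqm
    _ = lam*sx + mu*sy := Real.sqrt_sq (by positivity)

private lemma Vpos (s U Hh QP DD L KC : ℝ) (hU : 0 < U) (hH : 0 < Hh) (hUH : Hh < U)
    (hL0 : 0 ≤ L) (hLb : L ≤ 2*U*Hh/(U^2 - Hh^2)) (hKC : 0 ≤ KC)
    (hid : (2*s*Hh^2 - U*QP)^2 + U^2*(4*Hh^2*DD - QP^2) = 4*Hh^2*KC) :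
    0 ≤ (2*s*Hh^2 - U*QP)^2/(2*U*Hh^2*(U^2 - Hh^2)) + ((4*Hh^2*DD - QP^2)/(4*Hh^3))*L := by
  have hP : 0 < U^2 - Hh^2 := by nlinarith
  rcases le_or_gt 0 (4*Hh^2*DD - QP^2) with hpos | hneg
  · have t1 : 0 ≤ (2*s*Hh^2 - U*QP)^2/(2*U*Hh^2*(U^2 - Hh^2)) := by positivity
    have t2 : 0 ≤ ((4*Hh^2*DD - QP^2)/(4*Hh^3))*L := by positivity
    linarith
  · have hcoef : (4*Hh^2*DD - QP^2)/(4*Hh^3) ≤ 0 := by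
      apply div_nonpos_of_nonpos_of_nonneg hneg.le (by positivity)
    have t2 : ((4*Hh^2*DD - QP^2)/(4*Hh^3))*(2*U*Hh/(U^2 - Hh^2))
        ≤ ((4*Hh^2*DD - QP^2)/(4*Hh^3))*L :=
      mul_le_mul_of_nonpos_left hLb hcoef
    have e : (2*s*Hh^2 - U*QP)^2/(2*U*Hh^2*(U^2 - Hh^2))
        + ((4*Hh^2*DD - QP^2)/(4*Hh^3))*(2*U*Hh/(U^2 - Hh^2))
        = ((2*s*Hh^2 - U*QP)^2 + U^2*(4*Hh^2*DD - QP^2))/(2*U*Hh^2*(U^2 - Hh^2)) := by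
      field_simp
      ring
    have e2 : ((2*s*Hh^2 - U*QP)^2 + U^2*(4*Hh^2*DD - QP^2))/(2*U*Hh^2*(U^2 - Hh^2))
        = (4*Hh^2*KC)/(2*U*Hh^2*(U^2 - Hh^2)) := by rw [hid]
    have t3 : 0 ≤ (4*Hh^2*KC)/(2*U*Hh^2*(U^2 - Hh^2)) := by positivity
    linarith

private lemma Tfun_eq_log (uu hh : ℝ) (hu : 0 < uu) (hh0 : 0 ≤ hh) (hle : hh ≤ uu) :
    Tfun uu hh = (1/(4*Real.log 2)) * ((uu+hh)*Real.log (uu+hh) + (uu-hh)*Real.log (uu-hh)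
      - 2*(uu*Real.log uu)) := by
  have hl2 : Real.log 2 ≠ 0 := ne_of_gt (Real.log_pos (by norm_num))
  unfold Tfun
  rcases eq_or_lt_of_le hle with heq | hlt
  · subst heq
    rw [sub_self]
    rw [show hh + hh = 2*hh by ring, show (2*hh)/hh = 2 by field_simp]
    rw [Real.logb_self_eq_one (by norm_num)]
    rw [Real.log_mul (by norm_num) (ne_of_gt hu)]
    simp only [zero_mul, mul_zero, add_zero, mul_one, Real.log_zero]
    field_simp
    ring
  · have hup : (0:ℝ) < uu + hh := by linarith
    have hum : (0:ℝ) < uu - hh := by linarith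
    simp only [Real.logb]
    rw [Real.log_div (ne_of_gt hup) (ne_of_gt hu), Real.log_div (ne_of_gt hum) (ne_of_gt hu)]
    field_simp
    ring

private lemma conv_calc (r s c₃ c : ℝ) (hs : |s| < 1)
    (hKC : 0 ≤ s^2*(c^2+r^2) - 2*s*(r*c₃) + (c₃^2-c^2))
    (hq : ∀ z ∈ Ioo (-1:ℝ) 1, 0 < c^2*(1-z^2)+(r+c₃*z)^2)
    (hp : ∀ z ∈ Ioo (-1:ℝ) 1, c^2*(1-z^2)+(r+c₃*z)^2 < (1+s*z)^2)
    (hHle : ∀ z ∈ Icc (-1:ℝ) 1, Real.sqrt (c^2*(1-z^2)+(r+c₃*z)^2) ≤ 1+s*z) :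
    ConvexOn ℝ (Icc (-1:ℝ) 1) (fun z => Tfun (1+s*z) (Real.sqrt (c^2*(1-z^2)+(r+c₃*z)^2))) := by
  have hs1 := abs_lt.mp hs
  set DD : ℝ := c₃^2 - c^2 with hDD
  set q : ℝ → ℝ := fun z => c^2*(1-z^2)+(r+c₃*z)^2 with hqdef
  set qd : ℝ → ℝ := fun z => 2*(r*c₃) + 2*DD*z with hqddef
  set H : ℝ → ℝ := fun z => Real.sqrt (q z) with hHdef
  set u : ℝ → ℝ := fun z => 1+s*z with hudef
  have hupos : ∀ z ∈ Icc (-1:ℝ) 1, 0 < u z := by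
    intro z hz
    simp only [mem_Icc] at hz
    have hza : |z| ≤ 1 := abs_le.mpr hz
    have h1 : |s*z| < 1 := by
      rw [abs_mul]
      calc |s| * |z| ≤ |s| * 1 := mul_le_mul_of_nonneg_left hza (abs_nonneg s)
        _ < 1 := by rw [mul_one]; exact hs
    have h2 := (abs_lt.mp h1).1
    show 0 < 1 + s*z
    linarith
  have hH0 : ∀ z, 0 ≤ H z := fun z => Real.sqrt_nonneg _
  -- facts on the interior
  have hHpos : ∀ z ∈ Ioo (-1:ℝ) 1, 0 < H z := fun z hz => Real.sqrt_pos.mpr (hq z hz)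
  have hHsq : ∀ z ∈ Ioo (-1:ℝ) 1, (H z)^2 = q z := fun z hz => Real.sq_sqrt (hq z hz).le
  have hHlt : ∀ z ∈ Ioo (-1:ℝ) 1, H z < u z := by
    intro z hz
    have h1 : H z < Real.sqrt ((u z)^2) := by
      apply Real.sqrt_lt_sqrt (hq z hz).le (hp z hz)
    rwa [Real.sqrt_sq (hupos z (Ioo_subset_Icc_self hz)).le] at h1
  -- derivative of q and H
  have hderq : ∀ z : ℝ, HasDerivAt q (qd z) z := by
    intro z
    have h1 : HasDerivAt (fun z : ℝ => z^2) (2*z) z := by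
      simpa using hasDerivAt_pow 2 z
    have h2 : HasDerivAt (fun z : ℝ => 1 - z^2) (-(2*z)) z := by
      exact ((hasDerivAt_const z (1:ℝ)).sub h1).congr_deriv (by ring)
    have h3 : HasDerivAt (fun z : ℝ => r + c₃*z) c₃ z := by
      simpa using ((hasDerivAt_id z).const_mul c₃).const_add r
    have h4 : HasDerivAt (fun z : ℝ => (r + c₃*z)^2) (2*(r+c₃*z)*c₃) z := by
      exact (h3.pow 2).congr_deriv (by norm_num)
    have h5 := (h2.const_mul (c^2)).add h4
    refine h5.congr_deriv ?_
    simp only [hqddef, hDD]; ring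
  have hderu : ∀ z : ℝ, HasDerivAt u s z := by
    intro z
    simpa [hudef] using ((hasDerivAt_id z).const_mul s).const_add 1
  have hderH : ∀ z ∈ Ioo (-1:ℝ) 1, HasDerivAt H (qd z/(2*H z)) z := by
    intro z hz
    exact (hderq z).sqrt (ne_of_gt (hq z hz))
  -- the G1 function and its derivatives
  set k : ℝ := 1/(4*Real.log 2) with hk
  set G1 : ℝ → ℝ := fun z => k * ((u z + H z)*Real.log (u z + H z)
      + (u z - H z)*Real.log (u z - H z) - 2*((u z)*Real.log (u z))) with hG1
  set G1d : ℝ → ℝ := fun z => k * (s*(Real.log (u z + H z) + Real.log (u z - H z)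
      - 2*Real.log (u z)) + (qd z/(2*H z))*(Real.log (u z + H z) - Real.log (u z - H z))) with hG1d
  have hderG1 : ∀ z ∈ Ioo (-1:ℝ) 1, HasDerivAt G1 (G1d z) z := by
    intro z hz
    have hz' := Ioo_subset_Icc_self hz
    have hu0 := hupos z hz'
    have hH0' := hHpos z hz
    have hlt := hHlt z hz
    have hs1' : HasDerivAt (fun y => u y + H y) (s + qd z/(2*H z)) z :=
      (hderu z).add (hderH z hz)
    have hs2' : HasDerivAt (fun y => u y - H y) (s - qd z/(2*H z)) z :=
      (hderu z).sub (hderH z hz)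
    have hm1 : HasDerivAt (fun y => (u y + H y)*Real.log (u y + H y))
        ((Real.log (u z + H z) + 1)*(s + qd z/(2*H z))) z := by
      have hne : u z + H z ≠ 0 := by
        have := hH0 z; intro hcon; nlinarith
      exact (Real.hasDerivAt_mul_log (x := u z + H z) hne).comp z hs1'
    have hm2 : HasDerivAt (fun y => (u y - H y)*Real.log (u y - H y))
        ((Real.log (u z - H z) + 1)*(s - qd z/(2*H z))) z := by
      have hne : u z - H z ≠ 0 := by intro hcon; nlinarith
      exact (Real.hasDerivAt_mul_log (x := u z - H z) hne).comp z hs2'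
    have hm3 : HasDerivAt (fun y => (u y)*Real.log (u y))
        ((Real.log (u z) + 1)*s) z := by
      exact (Real.hasDerivAt_mul_log (x := u z) (ne_of_gt hu0)).comp z (hderu z)
    have htot := ((hm1.add hm2).sub (hm3.const_mul 2)).const_mul k
    refine htot.congr_deriv ?_
    simp only [hG1d]
    ring
  -- second derivative value
  set V : ℝ → ℝ := fun z => k * ((2*s*(H z)^2 - (u z)*(qd z))^2/(2*(u z)*(H z)^2*((u z)^2-(H z)^2))
      + ((4*(H z)^2*DD - (qd z)^2)/(4*(H z)^3))*(Real.log (u z + H z) - Real.log (u z - H z))) with hV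
  have hderG1d : ∀ z ∈ Ioo (-1:ℝ) 1, HasDerivAt G1d (V z) z := by
    intro z hz
    have hz' := Ioo_subset_Icc_self hz
    have hu0 := hupos z hz'
    have hH0' := hHpos z hz
    have hlt := hHlt z hz
    have hup : (0:ℝ) < u z + H z := by positivity
    have hum : (0:ℝ) < u z - H z := by linarith
    have hs1' : HasDerivAt (fun y => u y + H y) (s + qd z/(2*H z)) z :=
      (hderu z).add (hderH z hz)
    have hs2' : HasDerivAt (fun y => u y - H y) (s - qd z/(2*H z)) z :=
      (hderu z).sub (hderH z hz)
    have hl1 : HasDerivAt (fun y => Real.log (u y + H y))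
        ((u z + H z)⁻¹ * (s + qd z/(2*H z))) z :=
      (hs1'.log (ne_of_gt hup)).congr_deriv (by ring)
    have hl2 : HasDerivAt (fun y => Real.log (u y - H y))
        ((u z - H z)⁻¹ * (s - qd z/(2*H z))) z :=
      (hs2'.log (ne_of_gt hum)).congr_deriv (by ring)
    have hl3 : HasDerivAt (fun y => Real.log (u y))
        ((u z)⁻¹ * s) z :=
      (Real.hasDerivAt_log (ne_of_gt hu0)).comp z (hderu z)
    have hderqd : HasDerivAt qd (2*DD) z := by
      simpa [hqddef] using ((hasDerivAt_id z).const_mul (2*DD)).const_add (2*(r*c₃))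
    have hden : HasDerivAt (fun y => 2*H y) (2*(qd z/(2*H z))) z :=
      (hderH z hz).const_mul 2
    have hfrac : HasDerivAt (fun y => qd y/(2*H y))
        ((2*DD*(2*H z) - qd z*(2*(qd z/(2*H z))))/(2*H z)^2) z :=
      hderqd.div hden (by positivity)
    have hprod : HasDerivAt
        (fun y => (qd y/(2*H y))*(Real.log (u y + H y) - Real.log (u y - H y)))
        ((2*DD*(2*H z) - qd z*(2*(qd z/(2*H z))))/(2*H z)^2
            * (Real.log (u z + H z) - Real.log (u z - H z))
          + (qd z/(2*H z)) * ((u z + H z)⁻¹ * (s + qd z/(2*H z))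
            - (u z - H z)⁻¹ * (s - qd z/(2*H z)))) z :=
      hfrac.mul (hl1.sub hl2)
    have hsum : HasDerivAt
        (fun y => s*(Real.log (u y + H y) + Real.log (u y - H y) - 2*Real.log (u y)))
        (s*((u z + H z)⁻¹ * (s + qd z/(2*H z)) + (u z - H z)⁻¹ * (s - qd z/(2*H z))
          - 2*((u z)⁻¹ * s))) z :=
      ((hl1.add hl2).sub (hl3.const_mul 2)).const_mul s
    have htot := (hsum.add hprod).const_mul k
    have halg := deriv2_algebra s (u z) (H z) (qd z) DD
      (Real.log (u z + H z)) (Real.log (u z - H z))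
      (ne_of_gt hu0) (ne_of_gt hH0') (ne_of_gt hup) (ne_of_gt hum)
    refine htot.congr_deriv ?_
    simp only [hV]
    rw [halg]
  -- positivity of V on the interior
  have hVnn : ∀ z ∈ Ioo (-1:ℝ) 1, 0 ≤ V z := by
    intro z hz
    have hz' := Ioo_subset_Icc_self hz
    have hu0 := hupos z hz'
    have hH0' := hHpos z hz
    have hlt := hHlt z hz
    have hum : (0:ℝ) < u z - H z := by linarith
    have hL0 : 0 ≤ Real.log (u z + H z) - Real.log (u z - H z) := by
      have := Real.log_le_log hum (by linarith : u z - H z ≤ u z + H z)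
      linarith
    have hLb : Real.log (u z + H z) - Real.log (u z - H z)
        ≤ 2*(u z)*(H z)/((u z)^2 - (H z)^2) := by
      have h1 := logratio_bound (u z + H z) (u z - H z) hum (by linarith)
      have h2 : ((u z + H z)^2 - (u z - H z)^2)/(2*(u z + H z)*(u z - H z))
          = 2*(u z)*(H z)/((u z)^2 - (H z)^2) := by
        rw [show (u z + H z)^2 - (u z - H z)^2 = 4*(u z)*(H z) by ring,
            show 2*(u z + H z)*(u z - H z) = 2*((u z)^2 - (H z)^2) by ring]
        rw [show (4:ℝ)*(u z)*(H z) = 2*(2*(u z)*(H z)) by ring]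
        rw [mul_div_mul_left _ _ (by norm_num : (2:ℝ) ≠ 0)]
      rw [h2] at h1
      exact h1
    have hid : (2*s*(H z)^2 - (u z)*(qd z))^2 + (u z)^2*(4*(H z)^2*DD - (qd z)^2)
        = 4*(H z)^2*(s^2*(c^2+r^2) - 2*s*(r*c₃) + DD) := by
      rw [hHsq z hz]
      show (2*s*(c^2*(1-z^2)+(r+c₃*z)^2) - (1+s*z)*(2*(r*c₃) + 2*DD*z))^2
          + (1+s*z)^2*(4*(c^2*(1-z^2)+(r+c₃*z)^2)*DD - (2*(r*c₃) + 2*DD*z)^2)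
        = 4*(c^2*(1-z^2)+(r+c₃*z)^2)*(s^2*(c^2+r^2) - 2*s*(r*c₃) + DD)
      rw [hDD]
      ring
    have hmain := Vpos s (u z) (H z) (qd z) DD
      (Real.log (u z + H z) - Real.log (u z - H z))
      (s^2*(c^2+r^2) - 2*s*(r*c₃) + DD)
      hu0 hH0' hlt hL0 hLb hKC hid
    have hkpos : 0 < k := by
      rw [hk]
      have : (0:ℝ) < Real.log 2 := Real.log_pos (by norm_num)
      positivity
    have h2 := mul_le_mul_of_nonneg_left hmain hkpos.le
    rw [mul_zero] at h2
    exact h2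
  -- continuity
  have hl2 : Real.log 2 ≠ 0 := ne_of_gt (Real.log_pos (by norm_num))
  have hqcont : Continuous q := by
    show Continuous (fun z : ℝ => c^2*(1-z^2)+(r+c₃*z)^2)
    fun_prop
  have hHcont : Continuous H := Real.continuous_sqrt.comp hqcont
  have hucont : Continuous u := by
    show Continuous (fun z : ℝ => 1+s*z)
    fun_prop
  have hG1cont : Continuous G1 := by
    apply Continuous.mul continuous_const
    apply Continuous.sub
    · apply Continuous.add
      · exact Real.continuous_mul_log.comp (hucont.add hHcont)
      · exact Real.continuous_mul_log.comp (hucont.sub hHcont)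
    · exact continuous_const.mul (Real.continuous_mul_log.comp hucont)
  -- pointwise equality with Tfun form on Icc
  have hEq : ∀ z ∈ Icc (-1:ℝ) 1,
      Tfun (1+s*z) (Real.sqrt (c^2*(1-z^2)+(r+c₃*z)^2)) = G1 z := by
    intro z hz
    have hu0 := hupos z hz
    have hH0' := hH0 z
    have hle : H z ≤ u z := hHle z hz
    show Tfun (u z) (H z) = G1 z
    exact Tfun_eq_log (u z) (H z) hu0 hH0' hle
  -- convexity of G1
  have hconv : ConvexOn ℝ (Icc (-1:ℝ) 1) G1 := by
    apply convexOn_of_deriv2_nonneg (convex_Icc _ _) hG1cont.continuousOn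
    · rw [interior_Icc]
      intro z hz
      exact (hderG1 z hz).differentiableAt.differentiableWithinAt
    · rw [interior_Icc]
      intro z hz
      have hnb : Ioo (-1:ℝ) 1 ∈ nhds z := Ioo_mem_nhds hz.1 hz.2
      have hev : deriv G1 =ᶠ[nhds z] G1d :=
        Filter.eventuallyEq_of_mem hnb (fun y hy => (hderG1 y hy).deriv)
      exact ((hderG1d z hz).congr_of_eventuallyEq hev).differentiableAt.differentiableWithinAt
    · rw [interior_Icc]
      intro z hz
      have hnb : Ioo (-1:ℝ) 1 ∈ nhds z := Ioo_mem_nhds hz.1 hz.2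
      have hev : deriv G1 =ᶠ[nhds z] G1d :=
        Filter.eventuallyEq_of_mem hnb (fun y hy => (hderG1 y hy).deriv)
      have h1 : deriv (deriv G1) z = deriv G1d z := hev.deriv_eq
      have h2 : deriv G1d z = V z := (hderG1d z hz).deriv
      show 0 ≤ deriv^[2] G1 z
      rw [show deriv^[2] G1 z = deriv (deriv G1) z from rfl, h1, h2]
      exact hVnn z hz
  -- transfer along hEq
  refine ⟨convex_Icc _ _, fun x hx y hy a b ha hb hab => ?_⟩
  have hxy : a • x + b • y ∈ Icc (-1:ℝ) 1 := (convex_Icc (-1:ℝ) 1) hx hy ha hb hab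
  have h1 := hconv.2 hx hy ha hb hab
  simp only [smul_eq_mul] at h1 hxy ⊢
  rw [← hEq _ hxy, ← hEq _ hx, ← hEq _ hy] at h1
  exact h1

private lemma g_convexOn (r s c₃ c : ℝ) (hs : |s| < 1)
    (hH : ∀ z ∈ Icc (-1:ℝ) 1, Real.sqrt (c^2*(1-z^2)+(r+c₃*z)^2) ≤ 1+s*z)
    (hKC : 0 ≤ s^2*(c^2+r^2) - 2*s*(r*c₃) + (c₃^2-c^2)) :
    ConvexOn ℝ (Icc (-1:ℝ) 1) (fun z => Tfun (1+s*z) (Real.sqrt (c^2*(1-z^2)+(r+c₃*z)^2))) := by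
  have hs1 := abs_lt.mp hs
  have hupos : ∀ z ∈ Icc (-1:ℝ) 1, 0 < 1+s*z := by
    intro z hz
    simp only [mem_Icc] at hz
    have hza : |z| ≤ 1 := abs_le.mpr hz
    have h1 : |s*z| < 1 := by
      rw [abs_mul]
      calc |s| * |z| ≤ |s| * 1 := mul_le_mul_of_nonneg_left hza (abs_nonneg s)
        _ < 1 := by rw [mul_one]; exact hs
    have h2 := (abs_lt.mp h1).1
    linarith
  have hqnn : ∀ z ∈ Icc (-1:ℝ) 1, 0 ≤ c^2*(1-z^2)+(r+c₃*z)^2 := by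
    intro z hz
    simp only [mem_Icc] at hz
    have h1z : 0 ≤ 1 - z^2 := by nlinarith [hz.1, hz.2]
    nlinarith [mul_nonneg (sq_nonneg c) h1z, sq_nonneg (r+c₃*z)]
  have hqle : ∀ z ∈ Icc (-1:ℝ) 1, c^2*(1-z^2)+(r+c₃*z)^2 ≤ (1+s*z)^2 := by
    intro z hz
    have h1 := hH z hz
    have h3 : Real.sqrt (c^2*(1-z^2)+(r+c₃*z)^2)^2 ≤ (1+s*z)^2 :=
      pow_le_pow_left₀ (Real.sqrt_nonneg _) h1 2
    rwa [Real.sq_sqrt (hqnn z hz)] at h3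
  have qform : ∀ t : ℝ, c^2*(1-t^2)+(r+c₃*t)^2
      = (c^2+r^2) + (2*(r*c₃))*t + (c₃^2-c^2)*t^2 := fun t => by ring
  rcases le_or_gt ((2*(r*c₃))^2 - 4*(c^2+r^2)*(c₃^2-c^2)) 0 with hdisc | hdisc
  · -- Case A : H is convex
    refine ⟨convex_Icc _ _, fun x hx y hy a b ha hb hab => ?_⟩
    simp only [smul_eq_mul]
    have hm : a*x + b*y ∈ Icc (-1:ℝ) 1 := by
      have := (convex_Icc (-1:ℝ) 1) hx hy ha hb hab
      simpa using this
    have hqx : 0 ≤ (c^2+r^2) + (2*(r*c₃))*x + (c₃^2-c^2)*x^2 := by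
      rw [← qform]; exact hqnn x hx
    have hqy : 0 ≤ (c^2+r^2) + (2*(r*c₃))*y + (c₃^2-c^2)*y^2 := by
      rw [← qform]; exact hqnn y hy
    have hHc := sqrt_quad_convex (c^2+r^2) (2*(r*c₃)) (c₃^2-c^2) x y a b hqx hqy
      hdisc ha hb hab
    rw [← qform, ← qform, ← qform] at hHc
    have hux := hupos x hx
    have huy := hupos y hy
    have hHx := hH x hx
    have hHy := hH y hy
    have hcomb : a*Real.sqrt (c^2*(1-x^2)+(r+c₃*x)^2) + b*Real.sqrt (c^2*(1-y^2)+(r+c₃*y)^2)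
        ≤ a*(1+s*x) + b*(1+s*y) := by
      have t1 := mul_le_mul_of_nonneg_left hHx ha
      have t2 := mul_le_mul_of_nonneg_left hHy hb
      linarith
    have huu : a*(1+s*x) + b*(1+s*y) = 1+s*(a*x+b*y) := by linear_combination hab
    calc Tfun (1+s*(a*x+b*y)) (Real.sqrt (c^2*(1-(a*x+b*y)^2)+(r+c₃*(a*x+b*y))^2))
        ≤ Tfun (1+s*(a*x+b*y))
            (a*Real.sqrt (c^2*(1-x^2)+(r+c₃*x)^2) + b*Real.sqrt (c^2*(1-y^2)+(r+c₃*y)^2)) := by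
          apply Tmono _ _ _ (Real.sqrt_nonneg _) hHc (by linarith [hcomb, huu])
            (hupos _ hm)
      _ = Tfun (a*(1+s*x) + b*(1+s*y))
            (a*Real.sqrt (c^2*(1-x^2)+(r+c₃*x)^2) + b*Real.sqrt (c^2*(1-y^2)+(r+c₃*y)^2)) := by
          rw [huu]
      _ ≤ a * Tfun (1+s*x) (Real.sqrt (c^2*(1-x^2)+(r+c₃*x)^2))
            + b * Tfun (1+s*y) (Real.sqrt (c^2*(1-y^2)+(r+c₃*y)^2)) :=
          Tconvex a b _ _ _ _ ha hb hab (Real.sqrt_nonneg _) hHx hux (Real.sqrt_nonneg _) hHy huy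
  · -- Case B : disc > 0
    have hqpos : ∀ z ∈ Ioo (-1:ℝ) 1, 0 < c^2*(1-z^2)+(r+c₃*z)^2 := by
      intro z hz
      rcases eq_or_ne c 0 with rfl | hc0
      · exfalso
        have : (2*(r*c₃))^2 - 4*((0:ℝ)^2+r^2)*(c₃^2-(0:ℝ)^2) = 0 := by ring
        linarith
      · have h1z : 0 < 1 - z^2 := by nlinarith [hz.1, hz.2]
        have hc2 : 0 < c^2 := by positivity
        nlinarith [mul_pos hc2 h1z, sq_nonneg (r+c₃*z)]
    by_cases hex : ∃ z₀ ∈ Ioo (-1:ℝ) 1, c^2*(1-z₀^2)+(r+c₃*z₀)^2 = (1+s*z₀)^2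
    · obtain ⟨z₀, hz₀, hpz⟩ := hex
      set p : ℝ → ℝ := fun z => (1+s*z)^2 - (c^2*(1-z^2)+(r+c₃*z)^2) with hpdef
      have hp0 : p z₀ = 0 := by simp only [hpdef]; linarith [hpz]
      have hlocal : IsLocalMin p z₀ := by
        have hnb : Ioo (-1:ℝ) 1 ∈ nhds z₀ := Ioo_mem_nhds hz₀.1 hz₀.2
        filter_upwards [hnb] with y hy
        rw [hp0]
        have := hqle y (Ioo_subset_Icc_self hy)
        simp only [hpdef]
        linarith
      have hderp : HasDerivAt p (2*s*(1+s*z₀) - (2*(r*c₃) + 2*(c₃^2-c^2)*z₀)) z₀ := by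
        have h1 : HasDerivAt (fun z : ℝ => 1+s*z) s z₀ := by
          simpa using ((hasDerivAt_id z₀).const_mul s).const_add 1
        have h2 : HasDerivAt (fun z : ℝ => (1+s*z)^2) (2*(1+s*z₀)*s) z₀ := by
          exact (h1.pow 2).congr_deriv (by norm_num)
        have h3 : HasDerivAt (fun z : ℝ => z^2) (2*z₀) z₀ := by
          simpa using hasDerivAt_pow 2 z₀
        have h4 : HasDerivAt (fun z : ℝ => 1 - z^2) (-(2*z₀)) z₀ := by
          exact ((hasDerivAt_const z₀ (1:ℝ)).sub h3).congr_deriv (by ring)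
        have h5 : HasDerivAt (fun z : ℝ => r + c₃*z) c₃ z₀ := by
          simpa using ((hasDerivAt_id z₀).const_mul c₃).const_add r
        have h6 : HasDerivAt (fun z : ℝ => (r + c₃*z)^2) (2*(r+c₃*z₀)*c₃) z₀ := by
          exact (h5.pow 2).congr_deriv (by norm_num)
        have h7 := h2.sub ((h4.const_mul (c^2)).add h6)
        refine h7.congr_deriv ?_
        ring
      have hcrit := hlocal.deriv_eq_zero
      rw [hderp.deriv] at hcrit
      rcases lt_trichotomy (s^2 - (c₃^2-c^2)) 0 with hγ | hγ | hγ
      · exfalso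
        have h1 := hqle 1 (by norm_num)
        have e1 : (1+s*1)^2 - (c^2*(1-1^2)+(r+c₃*1)^2)
            = (s^2-(c₃^2-c^2))*(1-z₀)^2
              + (2*s*(1+s*z₀) - (2*(r*c₃)+2*(c₃^2-c^2)*z₀))*(1-z₀)
              + ((1+s*z₀)^2 - (c^2*(1-z₀^2)+(r+c₃*z₀)^2)) := by ring
        rw [hcrit, hpz] at e1
        have h4 : 0 < (1-z₀)^2 := by nlinarith [hz₀.2]
        nlinarith [mul_neg_of_neg_of_pos hγ h4]
      · -- degenerate : q ≡ u², g affine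
        have hDs : c₃^2 - c^2 = s^2 := by linarith
        have hb2s : r*c₃ = s := by linear_combination (-(1:ℝ)/2)*hcrit + (-z₀)*hDs
        have hA1 : c^2 + r^2 = 1 := by
          linear_combination hpz + (-2*z₀)*hb2s + (-z₀^2)*hDs
        refine ⟨convex_Icc _ _, fun x hx y hy a b ha hb hab => ?_⟩
        simp only [smul_eq_mul]
        have hval : ∀ w ∈ Icc (-1:ℝ) 1,
            Tfun (1+s*w) (Real.sqrt (c^2*(1-w^2)+(r+c₃*w)^2)) = (1+s*w)/2 := by
          intro w hw
          have hu0 := hupos w hw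
          have hqw : c^2*(1-w^2)+(r+c₃*w)^2 = (1+s*w)^2 := by
            linear_combination hA1 + (2*w)*hb2s + (w^2)*hDs
          rw [hqw, Real.sqrt_sq hu0.le]
          unfold Tfun
          rw [sub_self, show (1+s*w)+(1+s*w) = 2*(1+s*w) by ring,
            mul_div_assoc, div_self (ne_of_gt hu0), mul_one,
            Real.logb_self_eq_one (by norm_num)]
          ring
        have hm : a*x + b*y ∈ Icc (-1:ℝ) 1 := by
          have := (convex_Icc (-1:ℝ) 1) hx hy ha hb hab
          simpa using this
        rw [hval _ hm, hval _ hx, hval _ hy]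
        have : (1+s*(a*x+b*y))/2 = a*((1+s*x)/2) + b*((1+s*y)/2) := by
          linear_combination (-(1:ℝ)/2)*hab
        linarith [this]
      · exfalso
        have hu0 : 0 < 1+s*z₀ := hupos z₀ (Ioo_subset_Icc_self hz₀)
        have hcrit' : 2*(r*c₃)+2*(c₃^2-c^2)*z₀ = 2*s*(1+s*z₀) := by linarith [hcrit]
        have hidd : s^2*(c^2+r^2) - 2*s*(r*c₃) + (c₃^2-c^2)
            = s^2*(c^2*(1-z₀^2)+(r+c₃*z₀)^2)
              - s*(1+s*z₀)*(2*(r*c₃)+2*(c₃^2-c^2)*z₀) + (1+s*z₀)^2*(c₃^2-c^2) := by ring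
        rw [hpz, hcrit'] at hidd
        have hfin : s^2*(c^2+r^2) - 2*s*(r*c₃) + (c₃^2-c^2)
            = (1+s*z₀)^2*((c₃^2-c^2) - s^2) := by rw [hidd]; ring
        nlinarith [hKC, hfin, hγ, pow_pos hu0 2]
    · push_neg at hex
      have hplt : ∀ z ∈ Ioo (-1:ℝ) 1, c^2*(1-z^2)+(r+c₃*z)^2 < (1+s*z)^2 := by
        intro z hz
        exact lt_of_le_of_ne (hqle z (Ioo_subset_Icc_self hz)) (hex z hz)
      exact conv_calc r s c₃ c hs hKC hqpos hplt hH

theorem F_max_at_one_case_a (r s c₃ c : ℝ) (hc : 0 ≤ c) (hs : |s| < 1)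
    (hHp : ∀ z ∈ Set.Icc (0:ℝ) 1, Hp r c₃ c z ≤ 1 + s*z)
    (hHm : ∀ z ∈ Set.Icc (0:ℝ) 1, Hm r c₃ c z ≤ 1 - s*z)
    (hs0 : 0 ≤ s) (hrc₃ : r * c₃ ≤ 0) (hmix : s * (r * c₃) ≤ c₃^2 - c^2) :
    (∀ z ∈ Set.Icc (0:ℝ) 1, F r s c₃ c z ≤ F r s c₃ c 1) ∧
    F r s c₃ c 1 =
      (1/4) * (1 + s + r + c₃) * Real.logb 2 ((1 + s + r + c₃) / (1 + s)) +
      (1/4) * (1 + s - r - c₃) * Real.logb 2 ((1 + s - r - c₃) / (1 + s)) +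
      (1/4) * (1 - s + r - c₃) * Real.logb 2 ((1 - s + r - c₃) / (1 - s)) +
      (1/4) * (1 - s - r + c₃) * Real.logb 2 ((1 - s - r + c₃) / (1 - s)) := by
  set gf : ℝ → ℝ := fun w => Tfun (1+s*w) (Real.sqrt (c^2*(1-w^2)+(r+c₃*w)^2)) with hgf
  have hFeq : ∀ z : ℝ, F r s c₃ c z = gf z + gf (-z) := by
    intro z
    have e1 : (1:ℝ)+s*(-z) = 1-s*z := by ring
    have e2 : c^2*(1-(-z)^2)+(r+c₃*(-z))^2 = c^2*(1-z^2)+(r-c₃*z)^2 := by ring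
    have hg2 : gf (-z) = Tfun (1-s*z) (Hm r c₃ c z) := by
      simp only [hgf]
      rw [e1, e2]
      rfl
    have hg1 : gf z = Tfun (1+s*z) (Hp r c₃ c z) := rfl
    rw [hg1, hg2]
    unfold F Tfun
    ring
  have hHIcc : ∀ w ∈ Set.Icc (-1:ℝ) 1, Real.sqrt (c^2*(1-w^2)+(r+c₃*w)^2) ≤ 1+s*w := by
    intro w hw
    rw [Set.mem_Icc] at hw
    rcases le_or_gt 0 w with h0 | h0
    · exact hHp w (Set.mem_Icc.mpr ⟨h0, hw.2⟩)
    · have h1 := hHm (-w) (Set.mem_Icc.mpr ⟨by linarith, by linarith [hw.1]⟩)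
      have e1 : c^2*(1-(-w)^2)+(r-c₃*(-w))^2 = c^2*(1-w^2)+(r+c₃*w)^2 := by ring
      have e2 : 1 - s*(-w) = 1 + s*w := by ring
      show Real.sqrt (c^2*(1-w^2)+(r+c₃*w)^2) ≤ 1+s*w
      rw [← e1, ← e2]
      exact h1
  have hKC : 0 ≤ s^2*(c^2+r^2) - 2*s*(r*c₃) + (c₃^2-c^2) := by
    nlinarith [hmix, mul_nonneg hs0 (neg_nonneg.mpr hrc₃),
      mul_nonneg (sq_nonneg s) (add_nonneg (sq_nonneg c) (sq_nonneg r))]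
  have hcv : ConvexOn ℝ (Set.Icc (-1:ℝ) 1) gf := g_convexOn r s c₃ c hs hHIcc hKC
  have h1m : (1:ℝ) ∈ Set.Icc (-1:ℝ) 1 := Set.mem_Icc.mpr ⟨by norm_num, le_refl 1⟩
  have hm1m : (-1:ℝ) ∈ Set.Icc (-1:ℝ) 1 := Set.mem_Icc.mpr ⟨le_refl _, by norm_num⟩
  constructor
  · intro z hz
    rw [Set.mem_Icc] at hz
    have ha : (0:ℝ) ≤ (1+z)/2 := by linarith
    have hb : (0:ℝ) ≤ (1-z)/2 := by linarith
    have hab : (1+z)/2 + (1-z)/2 = 1 := by ring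
    have hab' : (1-z)/2 + (1+z)/2 = 1 := by ring
    have c1 := hcv.2 h1m hm1m ha hb hab
    have c2 := hcv.2 h1m hm1m hb ha hab'
    simp only [smul_eq_mul] at c1 c2
    rw [show (1+z)/2*1 + (1-z)/2*(-1) = z by ring] at c1
    rw [show (1-z)/2*1 + (1+z)/2*(-1) = -z by ring] at c2
    rw [hFeq z, hFeq 1]
    have e3 : -(1:ℝ) = -1 := rfl
    linarith [c1, c2]
  · have hp1 : Hp r c₃ c 1 = |r+c₃| := by
      show Real.sqrt (c^2*(1-1^2)+(r+c₃*1)^2) = |r+c₃|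
      rw [show c^2*((1:ℝ)-1^2)+(r+c₃*1)^2 = (r+c₃)^2 by ring]
      exact Real.sqrt_sq_eq_abs _
    have hm1 : Hm r c₃ c 1 = |r-c₃| := by
      show Real.sqrt (c^2*(1-1^2)+(r-c₃*1)^2) = |r-c₃|
      rw [show c^2*((1:ℝ)-1^2)+(r-c₃*1)^2 = (r-c₃)^2 by ring]
      exact Real.sqrt_sq_eq_abs _
    unfold F
    rw [hp1, hm1]
    rcases abs_cases (r+c₃) with ⟨e1,_⟩ | ⟨e1,_⟩ <;>
      rcases abs_cases (r-c₃) with ⟨e2,_⟩ | ⟨e2,_⟩ <;>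
      rw [e1, e2] <;> ring_nf
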